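/- Consider n workers with position-dependent velocities v_i : [0,1] → ℝ bounded between constants 0 < b < B, where at a fixed point of the reset function worker i+1 starts from the last position of worker i. Suppose (x̄₂,…,x̄ₙ) and (x₂*,…,xₙ*) are two fixed points of the no-station reset function. Then they are equal. (Key lemma: if the reset times satisfy T̄ > T*, then x̄ᵢ > xᵢ* for all i = 2,…,n by induction, contradicting x̄ₙ < xₙ*.) -/
import Mathlib


open MeasureTheory

private lemma bb_integrable (f : ℝ → ℝ) (hf : Measurable f) (b B : ℝ) (hb : 0 < b)
    (hv : ∀ t ∈ Set.Icc (0 : ℝ) 1, b ≤ f t ∧ f t ≤ B)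
    (c d : ℝ) (h0 : 0 ≤ c) (hcd : c ≤ d) (hd1 : d ≤ 1) :
    IntervalIntegrable (fun t => 1 / f t) volume c d := by
  rw [intervalIntegrable_iff_integrableOn_Ioc_of_le hcd]
  apply (integrable_const (1 / b)).mono'
  · exact ((measurable_const.div hf).aestronglyMeasurable)
  · filter_upwards [ae_restrict_mem measurableSet_Ioc] with t ht
    have ht' : t ∈ Set.Icc (0 : ℝ) 1 := ⟨le_trans h0 ht.1.le, le_trans ht.2 hd1⟩
    have h1 := (hv t ht').1
    have hpos : 0 < f t := lt_of_lt_of_le hb h1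
    rw [Real.norm_eq_abs, abs_of_nonneg (by positivity)]
    exact one_div_le_one_div_of_le hb h1

private lemma bb_lb (f : ℝ → ℝ) (hf : Measurable f) (b B : ℝ) (hb : 0 < b) (hB : b < B)
    (hv : ∀ t ∈ Set.Icc (0 : ℝ) 1, b ≤ f t ∧ f t ≤ B)
    (c d : ℝ) (h0 : 0 ≤ c) (hcd : c ≤ d) (hd1 : d ≤ 1) :
    (d - c) / B ≤ ∫ t in c..d, 1 / f t := by
  have hBpos : 0 < B := hb.trans hB
  have := intervalIntegral.integral_mono_on (f := fun _ => 1 / B) (g := fun t => 1 / f t)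
    hcd intervalIntegrable_const (bb_integrable f hf b B hb hv c d h0 hcd hd1) ?_
  · simpa [div_eq_mul_inv, mul_comm] using this
  · intro t ht
    have ht' : t ∈ Set.Icc (0 : ℝ) 1 := ⟨le_trans h0 ht.1, le_trans ht.2 hd1⟩
    have hpos : 0 < f t := lt_of_lt_of_le hb (hv t ht').1
    exact one_div_le_one_div_of_le hpos (hv t ht').2

private lemma bb_mono_set (f : ℝ → ℝ) (hf : Measurable f) (b B : ℝ) (hb : 0 < b) (hB : b < B)
    (hv : ∀ t ∈ Set.Icc (0 : ℝ) 1, b ≤ f t ∧ f t ≤ B)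
    (c c' d' d : ℝ) (h0 : 0 ≤ c) (h1 : c ≤ c') (h2 : c' ≤ d') (h3 : d' ≤ d) (h4 : d ≤ 1) :
    ∫ t in c'..d', 1 / f t ≤ ∫ t in c..d, 1 / f t := by
  have hBpos : 0 < B := hb.trans hB
  have hc'0 : 0 ≤ c' := h0.trans h1
  have hd'1 : d' ≤ 1 := h3.trans h4
  have I1 := bb_integrable f hf b B hb hv c c' h0 h1 (h2.trans hd'1)
  have I2 := bb_integrable f hf b B hb hv c' d' hc'0 h2 hd'1
  have I3 := bb_integrable f hf b B hb hv d' d (hc'0.trans h2) h3 h4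
  have e1 := intervalIntegral.integral_add_adjacent_intervals I1 I2
  have e2 := intervalIntegral.integral_add_adjacent_intervals (I1.trans I2) I3
  have L1 := bb_lb f hf b B hb hB hv c c' h0 h1 (h2.trans hd'1)
  have L3 := bb_lb f hf b B hb hB hv d' d (hc'0.trans h2) h3 h4
  have P1 : (0:ℝ) ≤ ∫ t in c..c', 1 / f t := le_trans (div_nonneg (by linarith) hBpos.le) L1
  have P3 : (0:ℝ) ≤ ∫ t in d'..d, 1 / f t := le_trans (div_nonneg (by linarith) hBpos.le) L3
  nlinarith [e1, e2]

private lemma bb_no_lt (n : ℕ) (hn : 1 ≤ n)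
    (v : Fin n → ℝ → ℝ) (b B : ℝ) (hb : 0 < b) (hB : b < B)
    (hmeas : ∀ i, Measurable (v i))
    (hv : ∀ i, ∀ t ∈ Set.Icc (0 : ℝ) 1, b ≤ v i t ∧ v i t ≤ B)
    (x y : Fin (n + 1) → ℝ)
    (hxmono : Monotone x) (hymono : Monotone y)
    (hx0 : x 0 = 0) (hxlast : x (Fin.last n) = 1)
    (hy0 : y 0 = 0) (hylast : y (Fin.last n) = 1)
    (T S : ℝ)
    (hxT : ∀ i : Fin n, ∫ t in (x i.castSucc)..(x i.succ), 1 / v i t = T)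
    (hyS : ∀ i : Fin n, ∫ t in (y i.castSucc)..(y i.succ), 1 / v i t = S)
    (hTS : T < S) : False := by
  have hx01 : ∀ i, 0 ≤ x i ∧ x i ≤ 1 := fun i =>
    ⟨hx0 ▸ hxmono (Fin.zero_le i), hxlast ▸ hxmono (Fin.le_last i)⟩
  have hy01 : ∀ i, 0 ≤ y i ∧ y i ≤ 1 := fun i =>
    ⟨hy0 ▸ hymono (Fin.zero_le i), hylast ▸ hymono (Fin.le_last i)⟩
  have key : ∀ i : Fin (n + 1), x i ≤ y i := by
    intro i
    induction i using Fin.induction with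
    | zero => rw [hx0, hy0]
    | succ i ih =>
      by_contra hlt
      push_neg at hlt
      have : S ≤ T := by
        rw [← hxT i, ← hyS i]
        exact bb_mono_set (v i) (hmeas i) b B hb hB (hv i)
          (x i.castSucc) (y i.castSucc) (y i.succ) (x i.succ)
          (hx01 _).1 ih (hymono (Fin.castSucc_le_succ i)) hlt.le (hx01 _).2
      linarith
  -- last interval gives contradiction
  have hn' : n - 1 < n := by omega
  set j : Fin n := ⟨n - 1, hn'⟩ with hj
  have hjsucc : j.succ = Fin.last n := by
    apply Fin.ext; simp [Fin.succ, Fin.last, hj]; omega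
  have : S ≤ T := by
    rw [← hxT j, ← hyS j]
    apply bb_mono_set (v j) (hmeas j) b B hb hB (hv j)
      (x j.castSucc) (y j.castSucc) (y j.succ) (x j.succ)
      (hx01 _).1 (key _) (hymono (Fin.castSucc_le_succ j))
      (by rw [hjsucc, hxlast, hylast]) (hx01 _).2
  linarith

/-- Uniqueness of the fixed point of the no-station reset function. A fixed
point is characterized by positions `0 = x₁ ≤ x₂ ≤ ⋯ ≤ xₙ ≤ x_{n+1} = 1` such that worker `i`
travels from `xᵢ` to `x_{i+1}` at speed `vᵢ` (never blocked) in a common reset time `T`, the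
travel time being `∫_{xᵢ}^{x_{i+1}} dt / vᵢ(t)`. Any two such fixed points coincide. -/
theorem no_station_fixed_point_unique (n : ℕ) (hn : 1 ≤ n)
    (v : Fin n → ℝ → ℝ) (b B : ℝ) (hb : 0 < b) (hB : b < B)
    (hmeas : ∀ i, Measurable (v i))
    (hv : ∀ i, ∀ t ∈ Set.Icc (0 : ℝ) 1, b ≤ v i t ∧ v i t ≤ B)
    (x y : Fin (n + 1) → ℝ)
    (hxmono : Monotone x) (hymono : Monotone y)
    (hx0 : x 0 = 0) (hxlast : x (Fin.last n) = 1)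
    (hy0 : y 0 = 0) (hylast : y (Fin.last n) = 1)
    (T S : ℝ)
    (hxT : ∀ i : Fin n, ∫ t in (x i.castSucc)..(x i.succ), 1 / v i t = T)
    (hyS : ∀ i : Fin n, ∫ t in (y i.castSucc)..(y i.succ), 1 / v i t = S) :
    x = y := by
  have hBpos : 0 < B := hb.trans hB
  have hx01 : ∀ i, 0 ≤ x i ∧ x i ≤ 1 := fun i =>
    ⟨hx0 ▸ hxmono (Fin.zero_le i), hxlast ▸ hxmono (Fin.le_last i)⟩
  have hy01 : ∀ i, 0 ≤ y i ∧ y i ≤ 1 := fun i =>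
    ⟨hy0 ▸ hymono (Fin.zero_le i), hylast ▸ hymono (Fin.le_last i)⟩
  have hTS : T = S := by
    rcases lt_trichotomy T S with h | h | h
    · exact absurd (bb_no_lt n hn v b B hb hB hmeas hv x y hxmono hymono hx0 hxlast hy0 hylast
        T S hxT hyS h) id
    · exact h
    · exact absurd (bb_no_lt n hn v b B hb hB hmeas hv y x hymono hxmono hy0 hylast hx0 hxlast
        S T hyS hxT h) id
  subst hTS
  funext i
  induction i using Fin.induction with
  | zero => rw [hx0, hy0]
  | succ i ih =>
    -- both integrals from the same left endpoint are equal; strict positivity gives equality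
    by_contra hne
    have step : ∀ (z w : Fin (n+1) → ℝ), Monotone z → Monotone w →
        (∀ k, 0 ≤ z k ∧ z k ≤ 1) → (∀ k, 0 ≤ w k ∧ w k ≤ 1) →
        z i.castSucc = w i.castSucc →
        (∫ t in (z i.castSucc)..(z i.succ), 1 / v i t) =
          (∫ t in (w i.castSucc)..(w i.succ), 1 / v i t) →
        z i.succ < w i.succ → False := by
      intro z w hz hw hz01 hw01 hcs hint hlt
      have hc0 : 0 ≤ z i.castSucc := (hz01 _).1
      have h1 : z i.castSucc ≤ z i.succ := hz (Fin.castSucc_le_succ i)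
      have h2 : w i.succ ≤ 1 := (hw01 _).2
      have I1 := bb_integrable (v i) (hmeas i) b B hb (hv i) (z i.castSucc) (z i.succ)
        hc0 h1 (hlt.le.trans h2)
      have I2 := bb_integrable (v i) (hmeas i) b B hb (hv i) (z i.succ) (w i.succ)
        (hc0.trans h1) hlt.le h2
      have e := intervalIntegral.integral_add_adjacent_intervals I1 I2
      have L := bb_lb (v i) (hmeas i) b B hb hB (hv i) (z i.succ) (w i.succ)
        (hc0.trans h1) hlt.le h2
      rw [hcs] at hint
      rw [hcs, hint] at e
      have hp : 0 < (w i.succ - z i.succ) / B := by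
        have : 0 < w i.succ - z i.succ := by linarith
        positivity
      linarith
    rcases lt_or_gt_of_ne hne with h | h
    · exact step x y hxmono hymono hx01 hy01 ih (by rw [hxT i, hyS i]) h
    · exact step y x hymono hxmono hy01 hx01 ih.symm (by rw [hxT i, hyS i]) h
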